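/- arXiv:1812.06214 — 5 statements merged into one kernel-verified Lean document; each statement's English description precedes it below -/
import Mathlib

section
/- Let G_k and G'_{k'} be mass-action systems, and for each x ∈ R_{>0}^n define flux vectors J(x) and J'(x) by J_{y→y'}(x) = k_{y→y'} x^y and J'_{y→y'}(x) = k'_{y→y'} x^y. Then the following are equivalent: (1) G_k and G'_{k'} are dynamically equivalent; (2) (G, J(x)) and (G', J'(x)) are flux equivalent for all x ∈ R_{>0}^n; (3) (G, J(x0)) and (G', J'(x0)) are flux equivalent for some x0 ∈ R_{>0}^n. -/
open Finset

noncomputable section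
open scoped Classical

abbrev Vtx (n : ℕ) := Fin n → ℝ

/-- A reaction network: a finite set of directed edges between points of ℝⁿ. -/
abbrev Net (n : ℕ) := Finset (Vtx n × Vtx n)

variable {n : ℕ}

/-- The vertices of a network. -/
def verts (G : Net n) : Finset (Vtx n) := G.image Prod.fst ∪ G.image Prod.snd

/-- The source vertices of a network. -/
def sources (G : Net n) : Finset (Vtx n) := G.image Prod.fst

/-- No self-loops. -/
def NoLoops (G : Net n) : Prop := ∀ e ∈ G, e.1 ≠ e.2

/-- `J` is a flux vector on `G`: positive on edges, zero on non-edges. -/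
def IsFlux (G : Net n) (J : Vtx n × Vtx n → ℝ) : Prop :=
  (∀ e ∈ G, 0 < J e) ∧ ∀ e, e ∉ G → J e = 0

/-- Total outgoing flux at a vertex. -/
def outSum (G : Net n) (J : Vtx n × Vtx n → ℝ) (v : Vtx n) : ℝ :=
  ∑ e ∈ G.filter (fun e => e.1 = v), J e

/-- Total incoming flux at a vertex. -/
def inSum (G : Net n) (J : Vtx n × Vtx n → ℝ) (v : Vtx n) : ℝ :=
  ∑ e ∈ G.filter (fun e => e.2 = v), J e

/-- Potential at a vertex: incoming minus outgoing flux (0 off the graph). -/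
def potential (G : Net n) (J : Vtx n × Vtx n → ℝ) (v : Vtx n) : ℝ :=
  inSum G J v - outSum G J v

/-- Complex-balanced flux: in-flux equals out-flux at every vertex. -/
def ComplexBalanced (G : Net n) (J : Vtx n × Vtx n → ℝ) : Prop :=
  ∀ v ∈ verts G, inSum G J v = outSum G J v

/-- Detailed-balanced flux: every edge is reversible and paired fluxes agree. -/
def DetailedBalanced (G : Net n) (J : Vtx n × Vtx n → ℝ) : Prop :=
  ∀ e ∈ G, (e.2, e.1) ∈ G ∧ J e = J (e.2, e.1)

/-- Steady state flux: flux-weighted reaction vectors sum to zero. -/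
def SteadyFlux (G : Net n) (J : Vtx n × Vtx n → ℝ) : Prop :=
  ∑ e ∈ G, J e • (e.2 - e.1) = 0

/-- Flux-weighted sum of outgoing reaction vectors at a vertex. -/
def netOut (G : Net n) (J : Vtx n × Vtx n → ℝ) (v : Vtx n) : Vtx n :=
  ∑ e ∈ G.filter (fun e => e.1 = v), J e • (e.2 - e.1)

/-- Flux equivalence of two flux systems. -/
def FluxEquiv (G : Net n) (J : Vtx n × Vtx n → ℝ)
    (G' : Net n) (J' : Vtx n × Vtx n → ℝ) : Prop :=
  ∀ v ∈ verts G ∪ verts G', netOut G J v = netOut G' J' v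

/-- Reachability along directed edges. -/
def Reachable (G : Net n) : Vtx n → Vtx n → Prop :=
  Relation.ReflTransGen (fun a b => (a, b) ∈ G)

/-- Weak reversibility: every edge lies on a directed cycle. -/
def WeaklyReversible (G : Net n) : Prop := ∀ e ∈ G, Reachable G e.2 e.1

/-- Reversibility: every edge has its reverse in the network. -/
def Reversible (G : Net n) : Prop := ∀ e ∈ G, (e.2, e.1) ∈ G

/-- Positive state. -/
def Pos (x : Vtx n) : Prop := ∀ i, 0 < x i

/-- Monomial `x^y = ∏ xᵢ^{yᵢ}` (real exponents). -/
def mono (x y : Vtx n) : ℝ := ∏ i, x i ^ y i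

/-- `k` is a vector of rate constants on `G`: positive on edges, zero off. -/
def IsMAS (G : Net n) (k : Vtx n × Vtx n → ℝ) : Prop :=
  (∀ e ∈ G, 0 < k e) ∧ ∀ e, e ∉ G → k e = 0

/-- The mass-action vector field of `G_k`. -/
def maf (G : Net n) (k : Vtx n × Vtx n → ℝ) (x : Vtx n) : Vtx n :=
  ∑ e ∈ G, (k e * mono x e.1) • (e.2 - e.1)

/-- Dynamical equivalence of mass-action systems. -/
def DynEquiv (G : Net n) (k : Vtx n × Vtx n → ℝ)
    (G' : Net n) (k' : Vtx n × Vtx n → ℝ) : Prop :=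
  ∀ x : Vtx n, Pos x → maf G k x = maf G' k' x

/-- `x` is a complex-balanced steady state of `G_k`. -/
def CBsteady (G : Net n) (k : Vtx n × Vtx n → ℝ) (x : Vtx n) : Prop :=
  ∀ v ∈ verts G,
    (∑ e ∈ G.filter (fun e => e.1 = v), k e * mono x v)
      = ∑ e ∈ G.filter (fun e => e.2 = v), k e * mono x e.1

/-- The stoichiometric subspace of a network. -/
def stoichSubspace (G : Net n) : Submodule ℝ (Vtx n) :=
  Submodule.span ℝ {d | ∃ e ∈ G, d = e.2 - e.1}

/-- Undirected connectivity relation of a network. -/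
def connRel (G : Net n) : Vtx n → Vtx n → Prop :=
  Relation.ReflTransGen (fun a b => (a, b) ∈ G ∨ (b, a) ∈ G)

/-- The number of connected components of a network. -/
def numComponents (G : Net n) : ℕ :=
  ((verts G).image (fun v => (verts G).filter (fun w => connRel G v w))).card

/-- The deficiency of a network. -/
def deficiency (G : Net n) : ℤ :=
  (verts G).card - numComponents G - Module.finrank ℝ (stoichSubspace G)

/-! Auxiliary lemmas -/

/-- The positive orthant as a commutative monoid under pointwise multiplication. -/
def PosM (n : ℕ) : Type := {x : Vtx n // Pos x}

instance : CommMonoid (PosM n) where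
  mul a b := ⟨fun i => a.1 i * b.1 i, fun i => mul_pos (a.2 i) (b.2 i)⟩
  one := ⟨fun _ => 1, fun _ => one_pos⟩
  mul_assoc a b c := Subtype.ext (funext fun i => mul_assoc _ _ _)
  one_mul a := Subtype.ext (funext fun i => one_mul _)
  mul_one a := Subtype.ext (funext fun i => mul_one _)
  mul_comm a b := Subtype.ext (funext fun i => mul_comm _ _)

/-- The character `x ↦ x^y` on the positive orthant. -/
def monoChar (y : Vtx n) : PosM n →* ℝ where
  toFun x := mono x.1 y
  map_one' := by
    simp only [mono]
    exact Finset.prod_eq_one fun i _ => Real.one_rpow _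
  map_mul' a b := by
    simp only [mono]
    rw [← Finset.prod_mul_distrib]
    exact Finset.prod_congr rfl fun i _ => Real.mul_rpow (a.2 i).le (b.2 i).le

lemma monoChar_injective : Function.Injective (monoChar (n := n)) := by
  intro y y' h
  funext i
  have hx : Pos (fun j => if j = i then Real.exp 1 else 1 : Vtx n) := by
    intro j; dsimp only; split
    · exact Real.exp_pos 1
    · exact one_pos
  have := congrArg (fun f : PosM n →* ℝ => f ⟨_, hx⟩) h
  simp only [monoChar, MonoidHom.coe_mk, OneHom.coe_mk, mono] at this
  have key : ∀ z : Vtx n,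
      (∏ j, (if j = i then Real.exp 1 else 1 : ℝ) ^ z j) = Real.exp (z i) := by
    intro z
    rw [Finset.prod_eq_single i (fun j _ hj => by simp [hj, Real.one_rpow])
      (fun h => absurd (Finset.mem_univ i) h)]
    simp [Real.exp_one_rpow]
  rw [key y, key y', Real.exp_eq_exp] at this
  exact this

lemma mono_li (S : Finset (Vtx n)) (c : Vtx n → ℝ)
    (h : ∀ x : Vtx n, Pos x → ∑ y ∈ S, c y * mono x y = 0) :
    ∀ y ∈ S, c y = 0 := by
  have li : LinearIndependent ℝ (fun y : Vtx n => ((monoChar y : PosM n →* ℝ) : PosM n → ℝ)) :=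
    (linearIndependent_monoidHom (PosM n) ℝ).comp monoChar monoChar_injective
  rw [linearIndependent_iff'] at li
  refine li S c ?_
  funext x
  have := h x.1 x.2
  simpa [Finset.sum_apply, monoChar, mono, mul_comm] using this

lemma mono_pos {x : Vtx n} (hx : Pos x) (y : Vtx n) : 0 < mono x y :=
  Finset.prod_pos fun i _ => Real.rpow_pos_of_pos (hx i) _

lemma netOut_smul (G : Net n) (k : Vtx n × Vtx n → ℝ) (x : Vtx n) (v : Vtx n) :
    netOut G (fun e => k e * mono x e.1) v = mono x v • netOut G k v := by
  unfold netOut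
  rw [Finset.smul_sum]
  refine Finset.sum_congr rfl fun e he => ?_
  have hv : e.1 = v := (Finset.mem_filter.mp he).2
  rw [show (fun e : Vtx n × Vtx n => k e * mono x e.1) e = mono x v * k e from by
    simp only []; rw [hv, mul_comm], mul_smul]

lemma maf_fiber (G : Net n) (k : Vtx n × Vtx n → ℝ) (x : Vtx n) (V : Finset (Vtx n))
    (hV : ∀ e ∈ G, e.1 ∈ V) :
    maf G k x = ∑ v ∈ V, netOut G (fun e => k e * mono x e.1) v :=
  (Finset.sum_fiberwise_of_maps_to hV _).symm

theorem stmt7 (G G' : Net n) (k k' : Vtx n × Vtx n → ℝ)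
    (hk : IsMAS G k) (hk' : IsMAS G' k') :
    (DynEquiv G k G' k' ↔
      ∀ x : Vtx n, Pos x →
        FluxEquiv G (fun e => k e * mono x e.1) G' (fun e => k' e * mono x e.1)) ∧
    (DynEquiv G k G' k' ↔
      ∃ x : Vtx n, Pos x ∧
        FluxEquiv G (fun e => k e * mono x e.1) G' (fun e => k' e * mono x e.1)) := by
  classical
  set V : Finset (Vtx n) := verts G ∪ verts G' with hVdef
  have hGV : ∀ e ∈ G, e.1 ∈ V := fun e he =>
    Finset.mem_union_left _ (Finset.mem_union_left _ (Finset.mem_image_of_mem _ he))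
  have hG'V : ∀ e ∈ G', e.1 ∈ V := fun e he =>
    Finset.mem_union_right _ (Finset.mem_union_left _ (Finset.mem_image_of_mem _ he))
  -- central property
  have hP : DynEquiv G k G' k' ↔ ∀ v ∈ V, netOut G k v = netOut G' k' v := by
    constructor
    · intro h v hv
      funext i
      have key : ∀ x : Vtx n, Pos x →
          ∑ w ∈ V, (netOut G k w i - netOut G' k' w i) * mono x w = 0 := by
        intro x hx
        have hx2 := h x hx
        rw [maf_fiber G k x V hGV, maf_fiber G' k' x V hG'V] at hx2
        have h3 := congrFun (sub_eq_zero.mpr hx2) i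
        rw [← Finset.sum_sub_distrib, Finset.sum_apply, Pi.zero_apply] at h3
        rw [← h3]
        refine Finset.sum_congr rfl fun w hw => ?_
        rw [netOut_smul, netOut_smul]
        simp only [Pi.sub_apply, Pi.smul_apply, smul_eq_mul]
        ring
      have h0 : netOut G k v i - netOut G' k' v i = 0 :=
        mono_li V (fun w => netOut G k w i - netOut G' k' w i) key v hv
      linarith
    · intro h x hx
      rw [maf_fiber G k x V hGV, maf_fiber G' k' x V hG'V]
      refine Finset.sum_congr rfl fun v hv => ?_
      rw [netOut_smul, netOut_smul, h v hv]
  have hFlux : ∀ x : Vtx n, Pos x →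
      (FluxEquiv G (fun e => k e * mono x e.1) G' (fun e => k' e * mono x e.1) ↔
        ∀ v ∈ V, netOut G k v = netOut G' k' v) := by
    intro x hx
    constructor
    · intro h v hv
      have := h v hv
      rw [netOut_smul, netOut_smul] at this
      exact smul_right_injective _ (ne_of_gt (mono_pos hx v)) this
    · intro h v hv
      rw [netOut_smul, netOut_smul, h v hv]
  have hone : Pos (fun _ => 1 : Vtx n) := fun _ => one_pos
  constructor
  · constructor
    · intro h x hx
      exact (hFlux x hx).mpr (hP.mp h)
    · intro h
      exact hP.mpr ((hFlux _ hone).mp (h _ hone))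
  · constructor
    · intro h
      exact ⟨_, hone, (hFlux _ hone).mpr (hP.mp h)⟩
    · rintro ⟨x, hx, h⟩
      exact hP.mpr ((hFlux x hx).mp h)
end
end

section
/- Dynamical equivalence of two mass-action systems G_k and G'_{k'} holds if and only if for every vertex y0 ∈ V_G ∪ V_{G'}, the weighted sums of outgoing reaction vectors agree: Σ_{y0→y ∈ G} k_{y0→y}(y - y0) = Σ_{y0→y' ∈ G'} k'_{y0→y'}(y' - y0). -/
open Finset

noncomputable section
open scoped Classical

variable {n : ℕ}

/-- The exponential character of a vertex. -/
noncomputable def chr (y : Vtx n) : Multiplicative (Vtx n) →* ℝ where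
  toFun u := Real.exp (∑ i, y i * Multiplicative.toAdd u i)
  map_one' := by simp
  map_mul' u v := by
    simp [← Real.exp_add, ← Finset.sum_add_distrib, mul_add]

lemma chr_injective : Function.Injective (chr (n := n)) := by
  intro y y' h
  funext i
  have := DFunLike.congr_fun h (Multiplicative.ofAdd (Pi.single i (1 : ℝ)))
  simp only [chr, MonoidHom.coe_mk, OneHom.coe_mk, toAdd_ofAdd] at this
  have hsum : ∀ z : Vtx n, ∑ j, z j * (Pi.single i (1:ℝ) : Vtx n) j = z i := by
    intro z
    rw [Finset.sum_eq_single i]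
    · simp
    · intro j _ hj; simp [Pi.single_apply, hj]
    · simp
  rw [hsum, hsum] at this
  exact Real.exp_injective this

lemma indep_exp (s : Finset (Vtx n)) (a : Vtx n → ℝ)
    (h : ∀ u : Vtx n, ∑ y ∈ s, a y * Real.exp (∑ i, y i * u i) = 0) :
    ∀ y ∈ s, a y = 0 := by
  have hli : LinearIndependent ℝ
      (fun y : Vtx n => ((chr y : Multiplicative (Vtx n) →* ℝ) : Multiplicative (Vtx n) → ℝ)) :=
    (linearIndependent_monoidHom (Multiplicative (Vtx n)) ℝ).comp chr chr_injective
  refine linearIndependent_iff'.mp hli s a ?_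
  funext u
  simpa [chr] using h (Multiplicative.toAdd u)

lemma mono_exp (u v : Vtx n) :
    mono (fun i => Real.exp (u i)) v = Real.exp (∑ i, v i * u i) := by
  unfold mono
  rw [Real.exp_sum]
  refine Finset.prod_congr rfl fun i _ => ?_
  rw [Real.rpow_def_of_pos (Real.exp_pos _), Real.log_exp, mul_comm]

lemma maf_group (G : Net n) (k : Vtx n × Vtx n → ℝ) (V : Finset (Vtx n))
    (hV : ∀ e ∈ G, e.1 ∈ V) (x : Vtx n) :
    maf G k x = ∑ v ∈ V, mono x v • netOut G k v := by
  unfold maf netOut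
  rw [← Finset.sum_fiberwise_of_maps_to hV]
  refine Finset.sum_congr rfl fun v _ => ?_
  rw [Finset.smul_sum]
  refine Finset.sum_congr rfl fun e he => ?_
  have he1 : e.1 = v := (Finset.mem_filter.mp he).2
  rw [he1, smul_smul, mul_comm]

theorem stmt8 (G G' : Net n) (k k' : Vtx n × Vtx n → ℝ)
    (hk : IsMAS G k) (hk' : IsMAS G' k') :
    DynEquiv G k G' k' ↔
      ∀ v ∈ verts G ∪ verts G', netOut G k v = netOut G' k' v := by
  set V := verts G ∪ verts G' with hVdef
  have hVG : ∀ e ∈ G, e.1 ∈ V := fun e he =>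
    Finset.mem_union_left _ (Finset.mem_union_left _ (Finset.mem_image_of_mem Prod.fst he))
  have hVG' : ∀ e ∈ G', e.1 ∈ V := fun e he =>
    Finset.mem_union_right _ (Finset.mem_union_left _ (Finset.mem_image_of_mem Prod.fst he))
  constructor
  · intro h v hv
    have key : ∀ u : Vtx n,
        ∑ w ∈ V, mono (fun i => Real.exp (u i)) w • (netOut G k w - netOut G' k' w) = 0 := by
      intro u
      have hx : Pos (fun i => Real.exp (u i)) := fun i => Real.exp_pos _
      have := h _ hx
      rw [maf_group G k V hVG, maf_group G' k' V hVG'] at this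
      simp only [smul_sub, Finset.sum_sub_distrib]
      rw [this, sub_self]
    have hz : netOut G k v - netOut G' k' v = 0 := by
      funext i
      refine indep_exp V (fun w => (netOut G k w - netOut G' k' w) i) (fun u => ?_) v hv
      have := congrFun (key u) i
      simpa [mono_exp, Finset.sum_apply, mul_comm] using this
    exact sub_eq_zero.mp hz
  · intro h x _
    rw [maf_group G k V hVG, maf_group G' k' V hVG']
    exact Finset.sum_congr rfl fun v hv => by rw [h v hv]
end
end

section
/- Let G_k be a mass-action system and x0 ∈ R_{>0}^n, and define the flux vector J on G by J_{y→y'} = k_{y→y'} x0^y. If the flux system (G, J) is flux equivalent to a complex-balanced flux system (G', J'), then G_k is dynamically equivalent to a mass-action system G'_{k'} (with k'_{y→y'} = J'_{y→y'} / x0^y) for which x0 is a complex-balanced steady state. -/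
open Finset

noncomputable section
open scoped Classical

variable {n : ℕ}

lemma maf_group_s9 (G : Net n) (c J : Vtx n × Vtx n → ℝ) (S : Finset (Vtx n))
    (hS : ∀ e ∈ G, (e : Vtx n × Vtx n).1 ∈ S) (w : Vtx n → ℝ)
    (hw : ∀ e ∈ G, c e = w e.1 * J e) :
    (∑ e ∈ G, c e • (e.2 - e.1)) = ∑ v ∈ S, w v • netOut G J v := by
  rw [← Finset.sum_fiberwise_of_maps_to hS (fun e => c e • (e.2 - e.1))]
  refine Finset.sum_congr rfl fun v _ => ?_
  rw [netOut, Finset.smul_sum]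
  refine Finset.sum_congr rfl fun e he => ?_
  simp only [Finset.mem_filter] at he
  rw [← he.2, smul_smul, ← hw e he.1]

theorem stmt9 (G G' : Net n) (k J' : Vtx n × Vtx n → ℝ) (hk : IsMAS G k)
    (x0 : Vtx n) (hx0 : Pos x0) (hJ' : IsFlux G' J')
    (hFE : FluxEquiv G (fun e => k e * mono x0 e.1) G' J')
    (hCB : ComplexBalanced G' J') :
    DynEquiv G k G' (fun e => J' e / mono x0 e.1) ∧
      CBsteady G' (fun e => J' e / mono x0 e.1) x0 := by
  have hm0 : ∀ y : Vtx n, mono x0 y ≠ 0 := fun y => (mono_pos hx0 y).ne'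
  constructor
  · intro x hx
    have h1 : maf G k x
        = ∑ v ∈ verts G ∪ verts G',
            (mono x v / mono x0 v) • netOut G (fun e => k e * mono x0 e.1) v := by
      refine maf_group_s9 G _ _ _ (fun e he => ?_) _ (fun e he => ?_)
      · exact Finset.mem_union_left _ (Finset.mem_union_left _
          (Finset.mem_image_of_mem Prod.fst he))
      · rw [div_mul_eq_mul_div, eq_div_iff (hm0 e.1)]; ring
    have h2 : maf G' (fun e => J' e / mono x0 e.1) x
        = ∑ v ∈ verts G ∪ verts G', (mono x v / mono x0 v) • netOut G' J' v := by
      refine maf_group_s9 G' _ _ _ (fun e he => ?_) _ (fun e he => ?_)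
      · exact Finset.mem_union_right _ (Finset.mem_union_left _
          (Finset.mem_image_of_mem Prod.fst he))
      · ring
    rw [h1, h2]
    exact Finset.sum_congr rfl fun v hv => by rw [hFE v hv]
  · intro v hv
    have hL : (∑ e ∈ G'.filter (fun e => e.1 = v),
        (fun e => J' e / mono x0 e.1) e * mono x0 v) = outSum G' J' v := by
      refine Finset.sum_congr rfl fun e he => ?_
      simp only [Finset.mem_filter] at he
      rw [← he.2]
      exact div_mul_cancel₀ _ (hm0 _)
    have hR : (∑ e ∈ G'.filter (fun e => e.2 = v),
        (fun e => J' e / mono x0 e.1) e * mono x0 e.1) = inSum G' J' v := by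
      refine Finset.sum_congr rfl fun e he => ?_
      exact div_mul_cancel₀ _ (hm0 _)
    rw [hL, hR]
    exact (hCB v hv).symm
end
end

section
/- Let G consist of the reactions z → y* and y* → y_j for j = 1,…,M, with flux vector J. Suppose y* is a virtual source (Σ_j J_{y*→y_j}(y_j - y*) = 0) and its potential is zero (Σ_j J_{y*→y_j} = J_{z→y*}). Let G' be obtained by removing all edges adjacent to y* and adding edges z → y_j with fluxes J'_{z→y_j} = J_{y*→y_j}. Then (G', J') is flux equivalent to (G, J), and the potential at every vertex is preserved: P_{(G',J')}(y_j) = P_{(G,J)}(y_j) for all j and P_{(G',J')}(z) = P_{(G,J)}(z). -/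
open Finset

noncomputable section
open scoped Classical

variable {n : ℕ}

theorem stmt10 (z ystar : Vtx n) (M : ℕ) (y : Fin M → Vtx n)
    (J0 : ℝ) (Jout : Fin M → ℝ) (hJ0 : 0 < J0) (hJout : ∀ j, 0 < Jout j)
    (hzs : z ≠ ystar) (hys : ∀ j, y j ≠ ystar)
    (hvs : ∑ j, Jout j • (y j - ystar) = 0)
    (hpot : ∑ j, Jout j = J0) :
    let G : Net n := insert (z, ystar)
      ((Finset.univ : Finset (Fin M)).image fun j => (ystar, y j))
    let J : Vtx n × Vtx n → ℝ := fun e =>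
      (if e = (z, ystar) then J0 else 0)
        + ∑ j ∈ Finset.univ.filter (fun j => (ystar, y j) = e), Jout j
    let G' : Net n := (Finset.univ : Finset (Fin M)).image fun j => (z, y j)
    let J' : Vtx n × Vtx n → ℝ := fun e =>
      ∑ j ∈ Finset.univ.filter (fun j => (z, y j) = e), Jout j
    FluxEquiv G J G' J' ∧
      (∀ j, potential G' J' (y j) = potential G J (y j)) ∧
      potential G' J' z = potential G J z := by
  intro G J G' J'
  have hJzy : J (z, ystar) = J0 := by
    have h : Finset.univ.filter (fun j : Fin M => (ystar, y j) = ((z, ystar) : Vtx n × Vtx n))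
        = ∅ := by
      ext j
      simp only [Finset.mem_filter, Finset.mem_univ, true_and, Finset.notMem_empty, iff_false,
        Prod.mk.injEq, not_and]
      intro h; exact absurd h.symm hzs
    simp only [J, if_pos rfl, h, Finset.sum_empty, add_zero, if_true]
  have hJy : ∀ j, J (ystar, y j)
      = ∑ j' ∈ Finset.univ.filter (fun j' => y j' = y j), Jout j' := by
    intro j
    have hne : ((ystar, y j) : Vtx n × Vtx n) ≠ (z, ystar) :=
      fun h => hzs (congrArg Prod.fst h).symm
    have h : Finset.univ.filter (fun j' : Fin M => (ystar, y j') = ((ystar, y j) : Vtx n × Vtx n))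
        = Finset.univ.filter (fun j' => y j' = y j) := by
      ext j'; simp [Prod.mk.injEq]
    simp only [J, if_neg hne, h, zero_add]
  have hJ'y : ∀ j, J' (z, y j)
      = ∑ j' ∈ Finset.univ.filter (fun j' => y j' = y j), Jout j' := by
    intro j
    have h : Finset.univ.filter (fun j' : Fin M => (z, y j') = ((z, y j) : Vtx n × Vtx n))
        = Finset.univ.filter (fun j' => y j' = y j) := by
      ext j'; simp [Prod.mk.injEq]
    simp only [J', h]
  -- in-sums
  have hinG : ∀ v : Vtx n, v ≠ ystar →
      inSum G J v = ∑ j ∈ Finset.univ.filter (fun j => y j = v), Jout j := by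
    intro v hv
    have hfe : G.filter (fun e => e.2 = v)
        = (Finset.univ.filter (fun j => y j = v)).image (fun j => ((ystar, y j) : Vtx n × Vtx n)) := by
      simp only [G]
      rw [Finset.filter_insert, if_neg (fun h => hv h.symm), Finset.filter_image]
    rw [inSum, hfe]
    refine Finset.sum_image' _ (fun j hj => ?_)
    have hjv : y j = v := (Finset.mem_filter.mp hj).2
    rw [hJy j]
    refine Finset.sum_congr ?_ (fun _ _ => rfl)
    ext j'
    simp only [Finset.mem_filter, Finset.mem_univ, true_and, Prod.mk.injEq]
    constructor
    · intro h; exact ⟨h.trans hjv, h⟩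
    · intro h; exact h.2
  have hinG' : ∀ v : Vtx n,
      inSum G' J' v = ∑ j ∈ Finset.univ.filter (fun j => y j = v), Jout j := by
    intro v
    have hfe : G'.filter (fun e => e.2 = v)
        = (Finset.univ.filter (fun j => y j = v)).image (fun j => ((z, y j) : Vtx n × Vtx n)) := by
      simp only [G']
      rw [Finset.filter_image]
    rw [inSum, hfe]
    refine Finset.sum_image' _ (fun j hj => ?_)
    have hjv : y j = v := (Finset.mem_filter.mp hj).2
    rw [hJ'y j]
    refine Finset.sum_congr ?_ (fun _ _ => rfl)
    ext j'
    simp only [Finset.mem_filter, Finset.mem_univ, true_and, Prod.mk.injEq]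
    constructor
    · intro h; exact ⟨h.trans hjv, h⟩
    · intro h; exact h.2
  -- out-sums
  have houtG : ∀ v : Vtx n, v ≠ ystar →
      outSum G J v = if v = z then J0 else 0 := by
    intro v hv
    have himg : Finset.univ.filter (fun j : Fin M => ((ystar, y j) : Vtx n × Vtx n).1 = v) = ∅ := by
      ext j
      simp only [Finset.mem_filter, Finset.mem_univ, true_and, Finset.notMem_empty, iff_false]
      exact fun h => hv h.symm
    rw [outSum]
    simp only [G, Finset.filter_insert, Finset.filter_image, himg, Finset.image_empty]
    by_cases hvz : v = z
    · rw [if_pos hvz.symm, if_pos hvz, Finset.sum_insert (Finset.notMem_empty _),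
        Finset.sum_empty, add_zero, hJzy]
    · rw [if_neg (fun h => hvz h.symm), if_neg hvz, Finset.sum_empty]
  have houtG' : ∀ v : Vtx n, outSum G' J' v = if v = z then J0 else 0 := by
    intro v
    rw [outSum]
    by_cases hvz : v = z
    · subst hvz
      rw [if_pos rfl, ← hpot]
      have hfe : G'.filter (fun e => e.1 = v) = G' := by
        refine Finset.filter_true_of_mem (fun e he => ?_)
        simp only [G', Finset.mem_image] at he
        obtain ⟨j, -, rfl⟩ := he
        rfl
      rw [hfe]
      show ∑ e ∈ Finset.univ.image (fun j => ((v, y j) : Vtx n × Vtx n)), J' e = _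
      refine Finset.sum_image' _ (fun j _ => ?_)
      rw [hJ'y j]
      refine Finset.sum_congr ?_ (fun _ _ => rfl)
      ext j'
      simp [Prod.mk.injEq]
    · rw [if_neg hvz]
      have hfe : G'.filter (fun e => e.1 = v) = ∅ := by
        ext e
        simp only [Finset.mem_filter, Finset.notMem_empty, iff_false, not_and, G',
          Finset.mem_image]
        rintro ⟨j, -, rfl⟩
        exact fun h => hvz h.symm
      rw [hfe, Finset.sum_empty]
  -- potentials
  have hpG : ∀ v : Vtx n, v ≠ ystar → potential G J v
      = (∑ j ∈ Finset.univ.filter (fun j => y j = v), Jout j) - (if v = z then J0 else 0) := by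
    intro v hv
    rw [potential, hinG v hv, houtG v hv]
  have hpG' : ∀ v : Vtx n, potential G' J' v
      = (∑ j ∈ Finset.univ.filter (fun j => y j = v), Jout j) - (if v = z then J0 else 0) := by
    intro v
    rw [potential, hinG' v, houtG' v]
  -- net out-fluxes
  have hnoG : ∀ v : Vtx n, netOut G J v = if v = z then J0 • (ystar - z) else 0 := by
    intro v
    rw [netOut]
    by_cases hvs' : v = ystar
    · subst hvs'
      rw [if_neg (fun h => hzs h.symm)]
      have hfe : G.filter (fun e => e.1 = v)
          = Finset.univ.image (fun j => ((v, y j) : Vtx n × Vtx n)) := by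
        simp only [G]
        rw [Finset.filter_insert, if_neg hzs, Finset.filter_image]
        simp
      rw [hfe]
      have : ∑ e ∈ Finset.univ.image (fun j => ((v, y j) : Vtx n × Vtx n)),
          J e • (e.2 - e.1) = ∑ j, Jout j • (y j - v) := by
        refine Finset.sum_image' _ (fun j _ => ?_)
        rw [hJy j, Finset.sum_smul]
        refine Finset.sum_congr ?_ ?_
        · ext j'; simp [Prod.mk.injEq]
        · intro j' hj'
          have : y j' = y j := by
            simpa [Prod.mk.injEq] using (Finset.mem_filter.mp hj').2
          rw [this]
      rw [this, hvs]
    · have himg : Finset.univ.filter (fun j : Fin M => ((ystar, y j) : Vtx n × Vtx n).1 = v)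
          = ∅ := by
        ext j
        simp only [Finset.mem_filter, Finset.mem_univ, true_and, Finset.notMem_empty, iff_false]
        exact fun h => hvs' h.symm
      simp only [G, Finset.filter_insert, Finset.filter_image, himg, Finset.image_empty]
      by_cases hvz : v = z
      · rw [if_pos hvz.symm, if_pos hvz, Finset.sum_insert (Finset.notMem_empty _),
          Finset.sum_empty, add_zero, hJzy]
      · rw [if_neg (fun h => hvz h.symm), if_neg hvz, Finset.sum_empty]
  have hnoG' : ∀ v : Vtx n, netOut G' J' v = if v = z then J0 • (ystar - z) else 0 := by
    intro v
    rw [netOut]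
    by_cases hvz : v = z
    · subst hvz
      rw [if_pos rfl]
      have hfe : G'.filter (fun e => e.1 = v) = G' := by
        refine Finset.filter_true_of_mem (fun e he => ?_)
        simp only [G', Finset.mem_image] at he
        obtain ⟨j, -, rfl⟩ := he
        rfl
      rw [hfe]
      have h1 : ∑ e ∈ (G' : Net n), J' e • (e.2 - e.1) = ∑ j, Jout j • (y j - v) := by
        show ∑ e ∈ Finset.univ.image (fun j => ((v, y j) : Vtx n × Vtx n)),
            J' e • (e.2 - e.1) = _
        refine Finset.sum_image' _ (fun j _ => ?_)
        rw [hJ'y j, Finset.sum_smul]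
        refine Finset.sum_congr ?_ ?_
        · ext j'; simp [Prod.mk.injEq]
        · intro j' hj'
          have : y j' = y j := by
            simpa [Prod.mk.injEq] using (Finset.mem_filter.mp hj').2
          rw [this]
      rw [h1]
      have h2 : ∀ j, Jout j • (y j - v) = Jout j • (y j - ystar) + Jout j • (ystar - v) := by
        intro j
        rw [← smul_add, sub_add_sub_cancel]
      rw [Finset.sum_congr rfl (fun j _ => h2 j), Finset.sum_add_distrib, hvs, zero_add,
        ← Finset.sum_smul, hpot]
    · rw [if_neg hvz]
      have hfe : G'.filter (fun e => e.1 = v) = ∅ := by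
        ext e
        simp only [Finset.mem_filter, Finset.notMem_empty, iff_false, not_and, G',
          Finset.mem_image]
        rintro ⟨j, -, rfl⟩
        exact fun h => hvz h.symm
      rw [hfe, Finset.sum_empty]
  refine ⟨fun v _ => ?_, fun j => ?_, ?_⟩
  · rw [hnoG v, hnoG' v]
  · rw [hpG' (y j), hpG (y j) (hys j)]
  · rw [hpG' z, hpG z hzs]
end
end

section
/- A flux system (G, J) is flux equivalent to some complex-balanced flux system if and only if it is flux equivalent to a complex-balanced flux system (G', J') whose vertex set is contained in the set of source vertices of G. -/
open Finset

noncomputable section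
open scoped Classical

variable {n : ℕ}

-- auxiliary lemmas
lemma mem_verts_fst {G : Net n} {e : Vtx n × Vtx n} (he : e ∈ G) : e.1 ∈ verts G :=
  Finset.mem_union_left _ (Finset.mem_image_of_mem _ he)

lemma mem_verts_snd {G : Net n} {e : Vtx n × Vtx n} (he : e ∈ G) : e.2 ∈ verts G :=
  Finset.mem_union_right _ (Finset.mem_image_of_mem _ he)

lemma sum_out_eq {M : Type*} [AddCommMonoid M] [Module ℝ M]
    (H : Net n) (K : Vtx n × Vtx n → ℝ) (hK : ∀ e, e ∉ H → K e = 0)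
    (w : Vtx n) (U : Finset (Vtx n)) (hU : ∀ e ∈ H, e.1 = w → e.2 ∈ U)
    (φ : Vtx n → M) :
    ∑ e ∈ H.filter (fun e => e.1 = w), K e • φ e.2 = ∑ y ∈ U, K (w, y) • φ y := by
  rw [← Finset.sum_filter_add_sum_filter_not U (fun y => (w, y) ∈ H)]
  have h2 : ∑ y ∈ U.filter (fun y => ¬ (w, y) ∈ H), K (w, y) • φ y = 0 := by
    apply Finset.sum_eq_zero; intro y hy
    rw [Finset.mem_filter] at hy
    rw [hK _ hy.2, zero_smul]
  rw [h2, add_zero]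
  refine Finset.sum_bij' (fun e _ => e.2) (fun y _ => (w, y)) ?_ ?_ ?_ ?_ ?_
  · intro e he
    rw [Finset.mem_filter] at he
    rw [Finset.mem_filter]
    have he2 : ((w, e.2) : Vtx n × Vtx n) = e := by
      rw [← he.2]
    refine ⟨hU e he.1 he.2, ?_⟩
    rw [he2]; exact he.1
  · intro y hy
    rw [Finset.mem_filter] at hy
    rw [Finset.mem_filter]
    exact ⟨hy.2, rfl⟩
  · intro e he
    rw [Finset.mem_filter] at he
    show ((w, e.2) : Vtx n × Vtx n) = e
    exact Prod.ext he.2.symm rfl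
  · intro y hy; rfl
  · intro e he
    rw [Finset.mem_filter] at he
    have hP : ((w, e.2) : Vtx n × Vtx n) = e := Prod.ext he.2.symm rfl
    show K e • φ e.2 = K (w, e.2) • φ e.2
    rw [hP]

lemma sum_in_eq {M : Type*} [AddCommMonoid M] [Module ℝ M]
    (H : Net n) (K : Vtx n × Vtx n → ℝ) (hK : ∀ e, e ∉ H → K e = 0)
    (w : Vtx n) (U : Finset (Vtx n)) (hU : ∀ e ∈ H, e.2 = w → e.1 ∈ U)
    (φ : Vtx n → M) :
    ∑ e ∈ H.filter (fun e => e.2 = w), K e • φ e.1 = ∑ x ∈ U, K (x, w) • φ x := by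
  rw [← Finset.sum_filter_add_sum_filter_not U (fun x => (x, w) ∈ H)]
  have h2 : ∑ x ∈ U.filter (fun x => ¬ (x, w) ∈ H), K (x, w) • φ x = 0 := by
    apply Finset.sum_eq_zero; intro x hx
    rw [Finset.mem_filter] at hx
    rw [hK _ hx.2, zero_smul]
  rw [h2, add_zero]
  refine Finset.sum_bij' (fun e _ => e.1) (fun x _ => (x, w)) ?_ ?_ ?_ ?_ ?_
  · intro e he
    rw [Finset.mem_filter] at he
    rw [Finset.mem_filter]
    have he2 : ((e.1, w) : Vtx n × Vtx n) = e := by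
      rw [← he.2]
    refine ⟨hU e he.1 he.2, ?_⟩
    rw [he2]; exact he.1
  · intro x hx
    rw [Finset.mem_filter] at hx
    rw [Finset.mem_filter]
    exact ⟨hx.2, rfl⟩
  · intro e he
    rw [Finset.mem_filter] at he
    show ((e.1, w) : Vtx n × Vtx n) = e
    exact Prod.ext rfl he.2.symm
  · intro x hx; rfl
  · intro e he
    rw [Finset.mem_filter] at he
    have hP : ((e.1, w) : Vtx n × Vtx n) = e := Prod.ext rfl he.2.symm
    show K e • φ e.1 = K (e.1, w) • φ e.1
    rw [hP]

lemma netOut_eq (H : Net n) (K : Vtx n × Vtx n → ℝ) (hK : ∀ e, e ∉ H → K e = 0)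
    (w : Vtx n) (U : Finset (Vtx n)) (hU : ∀ e ∈ H, e.1 = w → e.2 ∈ U) :
    netOut H K w = ∑ y ∈ U, K (w, y) • (y - w) := by
  unfold netOut
  rw [show (∑ e ∈ H.filter (fun e => e.1 = w), K e • (e.2 - e.1))
      = ∑ e ∈ H.filter (fun e => e.1 = w), K e • (e.2 - w) from
    Finset.sum_congr rfl (by intro e he; rw [Finset.mem_filter] at he; rw [he.2])]
  exact sum_out_eq H K hK w U hU (fun y => y - w)

lemma outSum_eq (H : Net n) (K : Vtx n × Vtx n → ℝ) (hK : ∀ e, e ∉ H → K e = 0)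
    (w : Vtx n) (U : Finset (Vtx n)) (hU : ∀ e ∈ H, e.1 = w → e.2 ∈ U) :
    outSum H K w = ∑ y ∈ U, K (w, y) := by
  have := sum_out_eq H K hK w U hU (fun _ => (1 : ℝ))
  simpa [outSum] using this

lemma inSum_eq (H : Net n) (K : Vtx n × Vtx n → ℝ) (hK : ∀ e, e ∉ H → K e = 0)
    (w : Vtx n) (U : Finset (Vtx n)) (hU : ∀ e ∈ H, e.2 = w → e.1 ∈ U) :
    inSum H K w = ∑ x ∈ U, K (x, w) := by
  have := sum_in_eq H K hK w U hU (fun _ => (1 : ℝ))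
  simpa [inSum] using this

lemma netOut_of_not_source {G : Net n} {J : Vtx n × Vtx n → ℝ} {v : Vtx n}
    (hv : v ∉ sources G) : netOut G J v = 0 := by
  unfold netOut
  have : G.filter (fun e => e.1 = v) = ∅ := by
    rw [Finset.filter_eq_empty_iff]
    intro e he h
    apply hv
    have : e.1 ∈ sources G := Finset.mem_image_of_mem Prod.fst he
    rwa [h] at this
  rw [this, Finset.sum_empty]

lemma step (G' : Net n) (J' : Vtx n × Vtx n → ℝ)
    (hF : IsFlux G' J') (hCB : ComplexBalanced G' J')
    (hNL : ∀ e ∈ G', e.1 ≠ e.2)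
    (v0 : Vtx n) (hv0 : v0 ∈ verts G') (hv0net : netOut G' J' v0 = 0) :
    ∃ (Gn : Net n) (Jn : Vtx n × Vtx n → ℝ),
      IsFlux Gn Jn ∧ ComplexBalanced Gn Jn ∧
      (∀ v, netOut Gn Jn v = netOut G' J' v) ∧
      verts Gn ⊆ (verts G').erase v0 ∧ (∀ e ∈ Gn, e.1 ≠ e.2) := by
  have hJnn : ∀ e, 0 ≤ J' e := by
    intro e
    by_cases h : e ∈ G'
    · exact (hF.1 e h).le
    · rw [hF.2 e h]
  have hloop : ∀ x : Vtx n, J' (x, x) = 0 := by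
    intro x
    apply hF.2
    intro h
    exact hNL _ h rfl
  -- v0 has an outgoing edge
  have hout : (G'.filter (fun e => e.1 = v0)).Nonempty := by
    by_contra h
    rw [Finset.not_nonempty_iff_eq_empty] at h
    have hO : outSum G' J' v0 = 0 := by unfold outSum; rw [h, Finset.sum_empty]
    have hI : inSum G' J' v0 = 0 := by rw [hCB v0 hv0, hO]
    rcases Finset.mem_union.1 hv0 with h1 | h1
    · obtain ⟨e, he, he1⟩ := Finset.mem_image.1 h1
      have hm : e ∈ G'.filter (fun e => e.1 = v0) := Finset.mem_filter.2 ⟨he, he1⟩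
      rw [h] at hm
      exact absurd hm (Finset.notMem_empty e)
    · obtain ⟨e, he, he2⟩ := Finset.mem_image.1 h1
      have hpos : 0 < inSum G' J' v0 :=
        Finset.sum_pos (fun f hf => hF.1 f (Finset.mem_filter.1 hf).1)
          ⟨e, Finset.mem_filter.2 ⟨he, he2⟩⟩
      rw [hI] at hpos
      exact lt_irrefl 0 hpos
  set T := outSum G' J' v0 with hTdef
  have hT : 0 < T :=
    Finset.sum_pos (fun f hf => hF.1 f (Finset.mem_filter.1 hf).1) hout
  have hTne : T ≠ 0 := ne_of_gt hT
  set A := G'.filter (fun e => e.1 ≠ v0 ∧ e.2 ≠ v0) with hAdef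
  set B := (((G'.filter (fun e => e.2 = v0)).image Prod.fst) ×ˢ
      ((G'.filter (fun e => e.1 = v0)).image Prod.snd)).filter (fun e => e.1 ≠ e.2) with hBdef
  set Gn := A ∪ B with hGndef
  set Jn := fun e : Vtx n × Vtx n =>
    if e ∈ Gn then J' e + J' (e.1, v0) * J' (v0, e.2) / T else 0 with hJndef
  have hBmem : ∀ e ∈ B, (e.1, v0) ∈ G' ∧ (v0, e.2) ∈ G' ∧ e.1 ≠ e.2 := by
    intro e he
    rw [hBdef, Finset.mem_filter, Finset.mem_product] at he
    obtain ⟨⟨h1, h2⟩, h3⟩ := he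
    obtain ⟨f, hf, hf1⟩ := Finset.mem_image.1 h1
    rw [Finset.mem_filter] at hf
    obtain ⟨g, hg, hg2⟩ := Finset.mem_image.1 h2
    rw [Finset.mem_filter] at hg
    refine ⟨?_, ?_, h3⟩
    · have : ((e.1, v0) : Vtx n × Vtx n) = f := Prod.ext hf1.symm hf.2.symm
      rw [this]; exact hf.1
    · have : ((v0, e.2) : Vtx n × Vtx n) = g := Prod.ext hg.2.symm hg2.symm
      rw [this]; exact hg.1
  have hBmem' : ∀ e : Vtx n × Vtx n, (e.1, v0) ∈ G' → (v0, e.2) ∈ G' → e.1 ≠ e.2 → e ∈ B := by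
    intro e h1 h2 h3
    rw [hBdef, Finset.mem_filter, Finset.mem_product]
    refine ⟨⟨?_, ?_⟩, h3⟩
    · exact Finset.mem_image.2 ⟨(e.1, v0), Finset.mem_filter.2 ⟨h1, rfl⟩, rfl⟩
    · exact Finset.mem_image.2 ⟨(v0, e.2), Finset.mem_filter.2 ⟨h2, rfl⟩, rfl⟩
  have hGne : ∀ e ∈ Gn, e.1 ≠ v0 ∧ e.2 ≠ v0 ∧ e.1 ≠ e.2 := by
    intro e he
    rcases Finset.mem_union.1 he with h | h
    · rw [hAdef, Finset.mem_filter] at h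
      exact ⟨h.2.1, h.2.2, hNL e h.1⟩
    · obtain ⟨h1, h2, h3⟩ := hBmem e h
      exact ⟨hNL _ h1, fun hc => hNL _ h2 hc.symm, h3⟩
  have hGnverts : ∀ e ∈ Gn, e.1 ∈ verts G' ∧ e.2 ∈ verts G' := by
    intro e he
    rcases Finset.mem_union.1 he with h | h
    · rw [hAdef, Finset.mem_filter] at h
      exact ⟨mem_verts_fst h.1, mem_verts_snd h.1⟩
    · obtain ⟨h1, h2, _⟩ := hBmem e h
      exact ⟨mem_verts_fst (e := (e.1, v0)) h1, mem_verts_snd (e := (v0, e.2)) h2⟩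
  have hJnoff : ∀ e, e ∉ Gn → Jn e = 0 := by
    intro e he
    show (if e ∈ Gn then J' e + J' (e.1, v0) * J' (v0, e.2) / T else 0) = 0
    exact if_neg he
  have hJn0 : ∀ w y : Vtx n, (w = v0 ∨ y = v0 ∨ w = y) → Jn (w, y) = 0 := by
    intro w y h
    apply hJnoff
    intro hmem
    obtain ⟨h1, h2, h3⟩ := hGne _ hmem
    rcases h with h | h | h
    · exact h1 h
    · exact h2 h
    · exact h3 h
  have hJnval : ∀ w y : Vtx n, w ≠ v0 → y ≠ v0 → w ≠ y →
      Jn (w, y) = J' (w, y) + J' (w, v0) * J' (v0, y) / T := by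
    intro w y h1 h2 h3
    by_cases hm : (w, y) ∈ Gn
    · show (if (w, y) ∈ Gn then J' (w, y) + J' ((w, y).1, v0) * J' (v0, (w, y).2) / T else 0)
          = J' (w, y) + J' (w, v0) * J' (v0, y) / T
      exact if_pos hm
    · rw [hJnoff _ hm]
      have hwy : J' (w, y) = 0 := by
        by_contra hc
        have hg : (w, y) ∈ G' := by
          by_contra hg
          exact hc (hF.2 _ hg)
        exact hm (Finset.mem_union_left _ (Finset.mem_filter.2 ⟨hg, h1, h2⟩))
      have hprod : J' (w, v0) * J' (v0, y) = 0 := by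
        by_contra hc
        have ha : (w, v0) ∈ G' := by
          by_contra hg
          apply hc; rw [hF.2 _ hg, zero_mul]
        have hb : (v0, y) ∈ G' := by
          by_contra hg
          apply hc; rw [hF.2 _ hg, mul_zero]
        exact hm (Finset.mem_union_right _ (hBmem' (w, y) ha hb h3))
      rw [hwy, hprod, zero_div, add_zero]
  have hFn : IsFlux Gn Jn := by
    constructor
    · intro e he
      show (0:ℝ) < if e ∈ Gn then J' e + J' (e.1, v0) * J' (v0, e.2) / T else 0
      rw [if_pos he]
      rcases Finset.mem_union.1 he with h | h
      · rw [hAdef, Finset.mem_filter] at h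
        exact add_pos_of_pos_of_nonneg (hF.1 e h.1)
          (div_nonneg (mul_nonneg (hJnn _) (hJnn _)) hT.le)
      · obtain ⟨h1, h2, _⟩ := hBmem e h
        exact add_pos_of_nonneg_of_pos (hJnn e)
          (div_pos (mul_pos (hF.1 _ h1) (hF.1 _ h2)) hT)
    · exact hJnoff
  set U := verts G' with hUdef
  have hv0U : v0 ∈ U := hv0
  set U' := U.erase v0 with hU'def
  have hnetGn : ∀ w, netOut Gn Jn w = ∑ y ∈ U, Jn (w, y) • (y - w) :=
    fun w => netOut_eq Gn Jn hJnoff w U (fun e he _ => (hGnverts e he).2)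
  have hnetG' : ∀ w, netOut G' J' w = ∑ y ∈ U, J' (w, y) • (y - w) :=
    fun w => netOut_eq G' J' hF.2 w U (fun e he _ => mem_verts_snd he)
  have hTsum : ∑ y ∈ U, J' (v0, y) = T := by
    rw [hTdef, outSum_eq G' J' hF.2 v0 U (fun e he _ => mem_verts_snd he)]
  have hTin : ∑ x ∈ U, J' (x, v0) = T := by
    rw [← inSum_eq G' J' hF.2 v0 U (fun e he _ => mem_verts_fst he)]
    rw [hCB v0 hv0, hTdef]
  have hvertsub : verts Gn ⊆ (verts G').erase v0 := by
    intro x hx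
    rcases Finset.mem_union.1 hx with h | h
    · obtain ⟨e, he, rfl⟩ := Finset.mem_image.1 h
      exact Finset.mem_erase.2 ⟨(hGne e he).1, (hGnverts e he).1⟩
    · obtain ⟨e, he, rfl⟩ := Finset.mem_image.1 h
      exact Finset.mem_erase.2 ⟨(hGne e he).2.1, (hGnverts e he).2⟩
  -- netOut preservation
  have hnet : ∀ w, netOut Gn Jn w = netOut G' J' w := by
    intro w
    by_cases hw : w = v0
    · subst hw
      rw [hnetGn, hv0net]
      apply Finset.sum_eq_zero
      intro y hy
      rw [hJn0 w y (Or.inl rfl), zero_smul]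
    · rw [hnetGn, hnetG']
      rw [← Finset.add_sum_erase U (fun y => Jn (w, y) • (y - w)) hv0U,
          ← Finset.add_sum_erase U (fun y => J' (w, y) • (y - w)) hv0U]
      rw [hJn0 w v0 (Or.inr (Or.inl rfl)), zero_smul, zero_add]
      have hpt : ∀ y ∈ U', Jn (w, y) • (y - w)
          = J' (w, y) • (y - w) + (J' (w, v0) / T) • (J' (v0, y) • (y - w)) := by
        intro y hy
        have hyv : y ≠ v0 := (Finset.mem_erase.1 hy).1
        by_cases hwy : w = y
        · subst hwy
          rw [sub_self, smul_zero, smul_zero, smul_zero, smul_zero, add_zero]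
        · rw [hJnval w y hw hyv hwy, add_smul, smul_smul]
          congr 2
          ring
      rw [Finset.sum_congr rfl hpt, Finset.sum_add_distrib, ← Finset.smul_sum]
      have hS : ∑ y ∈ U', J' (v0, y) • (y - w) = T • (v0 - w) := by
        have h1 : ∑ y ∈ U, J' (v0, y) • (y - w)
            = J' (v0, v0) • (v0 - w) + ∑ y ∈ U', J' (v0, y) • (y - w) :=
          (Finset.add_sum_erase U (fun y => J' (v0, y) • (y - w)) hv0U).symm
        rw [hloop v0, zero_smul, zero_add] at h1
        rw [← h1]
        have h2 : ∀ y ∈ U, J' (v0, y) • (y - w)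
            = J' (v0, y) • (y - v0) + J' (v0, y) • (v0 - w) := by
          intro y hy
          rw [← smul_add, sub_add_sub_cancel]
        rw [Finset.sum_congr rfl h2, Finset.sum_add_distrib, ← hnetG' v0, hv0net, zero_add,
            ← Finset.sum_smul, hTsum]
      rw [hS, smul_smul, div_mul_cancel₀ _ hTne]
      exact add_comm _ _
  -- complex balance
  have hCBn : ComplexBalanced Gn Jn := by
    intro w hw
    have hwe := hvertsub hw
    have hwv : w ≠ v0 := (Finset.mem_erase.1 hwe).1
    have hwU : w ∈ U := (Finset.mem_erase.1 hwe).2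
    have hwU' : w ∈ U' := Finset.mem_erase.2 ⟨hwv, hwU⟩
    rw [outSum_eq Gn Jn hJnoff w U (fun e he _ => (hGnverts e he).2),
        inSum_eq Gn Jn hJnoff w U (fun e he _ => (hGnverts e he).1)]
    have hosplit : ∑ y ∈ U, Jn (w, y)
        = ∑ y ∈ U'.erase w, (J' (w, y) + J' (w, v0) * J' (v0, y) / T) := by
      rw [← Finset.add_sum_erase U (fun y => Jn (w, y)) hv0U,
          hJn0 w v0 (Or.inr (Or.inl rfl)), zero_add,
          ← Finset.add_sum_erase U' (fun y => Jn (w, y)) hwU',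
          hJn0 w w (Or.inr (Or.inr rfl)), zero_add]
      apply Finset.sum_congr rfl
      intro y hy
      have hy1 : y ≠ w := (Finset.mem_erase.1 hy).1
      have hy2 : y ≠ v0 := (Finset.mem_erase.1 (Finset.mem_erase.1 hy).2).1
      exact hJnval w y hwv hy2 (Ne.symm hy1)
    have hisplit : ∑ x ∈ U, Jn (x, w)
        = ∑ x ∈ U'.erase w, (J' (x, w) + J' (x, v0) * J' (v0, w) / T) := by
      rw [← Finset.add_sum_erase U (fun x => Jn (x, w)) hv0U,
          hJn0 v0 w (Or.inl rfl), zero_add,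
          ← Finset.add_sum_erase U' (fun x => Jn (x, w)) hwU',
          hJn0 w w (Or.inr (Or.inr rfl)), zero_add]
      apply Finset.sum_congr rfl
      intro x hx
      have hx1 : x ≠ w := (Finset.mem_erase.1 hx).1
      have hx2 : x ≠ v0 := (Finset.mem_erase.1 (Finset.mem_erase.1 hx).2).1
      exact hJnval x w hx2 hwv hx1
    have e1 : ∑ y ∈ U'.erase w, J' (w, y) = outSum G' J' w - J' (w, v0) := by
      have ha : ∑ y ∈ U, J' (w, y) = J' (w, v0) + ∑ y ∈ U', J' (w, y) :=
        (Finset.add_sum_erase U (fun y => J' (w, y)) hv0U).symm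
      have hb : ∑ y ∈ U', J' (w, y) = J' (w, w) + ∑ y ∈ U'.erase w, J' (w, y) :=
        (Finset.add_sum_erase U' (fun y => J' (w, y)) hwU').symm
      rw [hloop w, zero_add] at hb
      rw [outSum_eq G' J' hF.2 w U (fun e he _ => mem_verts_snd he), ha, hb]
      ring
    have e2 : ∑ y ∈ U'.erase w, J' (v0, y) = T - J' (v0, w) := by
      have ha : ∑ y ∈ U, J' (v0, y) = J' (v0, v0) + ∑ y ∈ U', J' (v0, y) :=
        (Finset.add_sum_erase U (fun y => J' (v0, y)) hv0U).symm
      rw [hloop v0, zero_add, hTsum] at ha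
      have hb : ∑ y ∈ U', J' (v0, y) = J' (v0, w) + ∑ y ∈ U'.erase w, J' (v0, y) :=
        (Finset.add_sum_erase U' (fun y => J' (v0, y)) hwU').symm
      rw [hb] at ha
      linarith
    have e3 : ∑ x ∈ U'.erase w, J' (x, w) = inSum G' J' w - J' (v0, w) := by
      have ha : ∑ x ∈ U, J' (x, w) = J' (v0, w) + ∑ x ∈ U', J' (x, w) :=
        (Finset.add_sum_erase U (fun x => J' (x, w)) hv0U).symm
      have hb : ∑ x ∈ U', J' (x, w) = J' (w, w) + ∑ x ∈ U'.erase w, J' (x, w) :=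
        (Finset.add_sum_erase U' (fun x => J' (x, w)) hwU').symm
      rw [hloop w, zero_add] at hb
      rw [inSum_eq G' J' hF.2 w U (fun e he _ => mem_verts_fst he), ha, hb]
      ring
    have e4 : ∑ x ∈ U'.erase w, J' (x, v0) = T - J' (w, v0) := by
      have ha : ∑ x ∈ U, J' (x, v0) = J' (v0, v0) + ∑ x ∈ U', J' (x, v0) :=
        (Finset.add_sum_erase U (fun x => J' (x, v0)) hv0U).symm
      rw [hloop v0, zero_add, hTin] at ha
      have hb : ∑ x ∈ U', J' (x, v0) = J' (w, v0) + ∑ x ∈ U'.erase w, J' (x, v0) :=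
        (Finset.add_sum_erase U' (fun x => J' (x, v0)) hwU').symm
      rw [hb] at ha
      linarith
    rw [hosplit, hisplit, Finset.sum_add_distrib, Finset.sum_add_distrib]
    have hd1 : ∑ y ∈ U'.erase w, J' (w, v0) * J' (v0, y) / T
        = J' (w, v0) * (T - J' (v0, w)) / T := by
      rw [← Finset.sum_div, ← Finset.mul_sum, e2]
    have hd2 : ∑ x ∈ U'.erase w, J' (x, v0) * J' (v0, w) / T
        = (T - J' (w, v0)) * J' (v0, w) / T := by
      rw [← Finset.sum_div, ← Finset.sum_mul, e4]
    rw [hd1, hd2, e1, e3, hCB w hwU]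
    field_simp
    ring
  have hNLn : ∀ e ∈ Gn, e.1 ≠ e.2 := fun e he => (hGne e he).2.2
  exact ⟨Gn, Jn, hFn, hCBn, hnet, hvertsub, hNLn⟩

lemma deloop (G' : Net n) (J' : Vtx n × Vtx n → ℝ)
    (hF : IsFlux G' J') (hCB : ComplexBalanced G' J') :
    ∃ (G₀ : Net n) (J₀ : Vtx n × Vtx n → ℝ),
      IsFlux G₀ J₀ ∧ ComplexBalanced G₀ J₀ ∧
      (∀ v, netOut G₀ J₀ v = netOut G' J' v) ∧
      verts G₀ ⊆ verts G' ∧ (∀ e ∈ G₀, e.1 ≠ e.2) := by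
  set G₀ := G'.filter (fun e => e.1 ≠ e.2) with hG₀def
  set J₀ := fun e : Vtx n × Vtx n => if e.1 = e.2 then 0 else J' e with hJ₀def
  have hG₀sub : G₀ ⊆ G' := Finset.filter_subset _ _
  have hNL : ∀ e ∈ G₀, e.1 ≠ e.2 := fun e he => (Finset.mem_filter.1 he).2
  have hJ₀off : ∀ e, e ∉ G₀ → J₀ e = 0 := by
    intro e he
    show (if e.1 = e.2 then 0 else J' e) = 0
    by_cases h : e.1 = e.2
    · exact if_pos h
    · rw [if_neg h]
      apply hF.2
      intro hg
      exact he (Finset.mem_filter.2 ⟨hg, h⟩)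
  have hF₀ : IsFlux G₀ J₀ := by
    constructor
    · intro e he
      show (0:ℝ) < if e.1 = e.2 then 0 else J' e
      rw [if_neg (hNL e he)]
      exact hF.1 e (hG₀sub he)
    · exact hJ₀off
  have hvsub : verts G₀ ⊆ verts G' := by
    intro x hx
    rcases Finset.mem_union.1 hx with h | h
    · obtain ⟨e, he, rfl⟩ := Finset.mem_image.1 h
      exact mem_verts_fst (hG₀sub he)
    · obtain ⟨e, he, rfl⟩ := Finset.mem_image.1 h
      exact mem_verts_snd (hG₀sub he)
  set U := verts G' with hUdef
  have hnet : ∀ v, netOut G₀ J₀ v = netOut G' J' v := by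
    intro v
    rw [netOut_eq G₀ J₀ hJ₀off v U (fun e he _ => mem_verts_snd (hG₀sub he)),
        netOut_eq G' J' hF.2 v U (fun e he _ => mem_verts_snd he)]
    apply Finset.sum_congr rfl
    intro y hy
    by_cases h : y = v
    · subst h
      rw [sub_self, smul_zero, smul_zero]
    · have : J₀ (v, y) = J' (v, y) := by
        show (if (v, y).1 = (v, y).2 then 0 else J' (v, y)) = J' (v, y)
        exact if_neg (fun hc => h hc.symm)
      rw [this]
  have hCB₀ : ComplexBalanced G₀ J₀ := by
    intro w hw
    have hwU : w ∈ U := hvsub hw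
    rw [outSum_eq G₀ J₀ hJ₀off w U (fun e he _ => mem_verts_snd (hG₀sub he)),
        inSum_eq G₀ J₀ hJ₀off w U (fun e he _ => mem_verts_fst (hG₀sub he))]
    have ho : ∑ y ∈ U, J₀ (w, y) = outSum G' J' w - J' (w, w) := by
      rw [← Finset.add_sum_erase U (fun y => J₀ (w, y)) hwU]
      have h1 : J₀ (w, w) = 0 := if_pos rfl
      rw [h1, zero_add]
      have h2 : ∀ y ∈ U.erase w, J₀ (w, y) = J' (w, y) := by
        intro y hy
        have : y ≠ w := (Finset.mem_erase.1 hy).1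
        show (if (w, y).1 = (w, y).2 then 0 else J' (w, y)) = J' (w, y)
        exact if_neg (fun hc => this hc.symm)
      rw [Finset.sum_congr rfl h2]
      have h3 : ∑ y ∈ U, J' (w, y) = J' (w, w) + ∑ y ∈ U.erase w, J' (w, y) :=
        (Finset.add_sum_erase U (fun y => J' (w, y)) hwU).symm
      rw [outSum_eq G' J' hF.2 w U (fun e he _ => mem_verts_snd he), h3]
      ring
    have hi : ∑ x ∈ U, J₀ (x, w) = inSum G' J' w - J' (w, w) := by
      rw [← Finset.add_sum_erase U (fun x => J₀ (x, w)) hwU]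
      have h1 : J₀ (w, w) = 0 := if_pos rfl
      rw [h1, zero_add]
      have h2 : ∀ x ∈ U.erase w, J₀ (x, w) = J' (x, w) := by
        intro x hx
        have : x ≠ w := (Finset.mem_erase.1 hx).1
        show (if (x, w).1 = (x, w).2 then 0 else J' (x, w)) = J' (x, w)
        exact if_neg this
      rw [Finset.sum_congr rfl h2]
      have h3 : ∑ x ∈ U, J' (x, w) = J' (w, w) + ∑ x ∈ U.erase w, J' (x, w) :=
        (Finset.add_sum_erase U (fun x => J' (x, w)) hwU).symm
      rw [inSum_eq G' J' hF.2 w U (fun e he _ => mem_verts_fst he), h3]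
      ring
    rw [ho, hi, hCB w hwU]
  exact ⟨G₀, J₀, hF₀, hCB₀, hnet, hvsub, hNL⟩

lemma reduce (G : Net n) (J : Vtx n × Vtx n → ℝ) :
    ∀ (m : ℕ) (G' : Net n) (J' : Vtx n × Vtx n → ℝ),
      (verts G' \ sources G).card ≤ m →
      IsFlux G' J' → ComplexBalanced G' J' → FluxEquiv G J G' J' →
      (∀ e ∈ G', e.1 ≠ e.2) →
      ∃ (G'' : Net n) (J'' : Vtx n × Vtx n → ℝ),
        IsFlux G'' J'' ∧ ComplexBalanced G'' J'' ∧ FluxEquiv G J G'' J'' ∧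
        verts G'' ⊆ sources G := by
  intro m
  induction m with
  | zero =>
    intro G' J' hcard hF hCB hFE _
    refine ⟨G', J', hF, hCB, hFE, ?_⟩
    intro v hv
    by_contra hvs
    have : v ∈ verts G' \ sources G := Finset.mem_sdiff.2 ⟨hv, hvs⟩
    have h0 : (verts G' \ sources G) = ∅ := Finset.card_eq_zero.1 (Nat.le_zero.1 hcard)
    rw [h0] at this
    exact Finset.notMem_empty v this
  | succ m ih =>
    intro G' J' hcard hF hCB hFE hNL
    by_cases hsub : verts G' ⊆ sources G
    · exact ⟨G', J', hF, hCB, hFE, hsub⟩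
    · obtain ⟨v0, hv0m⟩ : (verts G' \ sources G).Nonempty := by
        rw [Finset.sdiff_nonempty]
        exact hsub
      have hv0 : v0 ∈ verts G' := (Finset.mem_sdiff.1 hv0m).1
      have hv0s : v0 ∉ sources G := (Finset.mem_sdiff.1 hv0m).2
      have hv0net : netOut G' J' v0 = 0 := by
        rw [← hFE v0 (Finset.mem_union_right _ hv0)]
        exact netOut_of_not_source hv0s
      obtain ⟨Gn, Jn, hFn, hCBn, hnet, hvsub, hNLn⟩ :=
        step G' J' hF hCB hNL v0 hv0 hv0net
      have hvsub' : verts Gn ⊆ verts G' :=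
        fun x hx => (Finset.mem_erase.1 (hvsub hx)).2
      apply ih Gn Jn ?_ hFn hCBn ?_ hNLn
      · -- cardinality decreases
        have h1 : verts Gn \ sources G ⊆ (verts G' \ sources G).erase v0 := by
          intro x hx
          rw [Finset.mem_sdiff] at hx
          have h2 := Finset.mem_erase.1 (hvsub hx.1)
          exact Finset.mem_erase.2 ⟨h2.1, Finset.mem_sdiff.2 ⟨h2.2, hx.2⟩⟩
        calc (verts Gn \ sources G).card
            ≤ ((verts G' \ sources G).erase v0).card := Finset.card_le_card h1
          _ = (verts G' \ sources G).card - 1 := Finset.card_erase_of_mem hv0m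
          _ ≤ m := by omega
      · -- flux equivalence
        intro v hv
        have hv' : v ∈ verts G ∪ verts G' := by
          rcases Finset.mem_union.1 hv with h | h
          · exact Finset.mem_union_left _ h
          · exact Finset.mem_union_right _ (hvsub' h)
        rw [hnet v]
        exact hFE v hv'

theorem stmt12 (G : Net n) (J : Vtx n × Vtx n → ℝ) (hJ : IsFlux G J) :
    (∃ (G' : Net n) (J' : Vtx n × Vtx n → ℝ),
      IsFlux G' J' ∧ ComplexBalanced G' J' ∧ FluxEquiv G J G' J') ↔
    (∃ (G' : Net n) (J' : Vtx n × Vtx n → ℝ),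
      IsFlux G' J' ∧ ComplexBalanced G' J' ∧ FluxEquiv G J G' J' ∧
        verts G' ⊆ sources G) := by
  constructor
  · rintro ⟨G', J', hF, hCB, hFE⟩
    obtain ⟨G₀, J₀, hF₀, hCB₀, hnet₀, hvsub₀, hNL₀⟩ := deloop G' J' hF hCB
    have hFE₀ : FluxEquiv G J G₀ J₀ := by
      intro v hv
      have hv' : v ∈ verts G ∪ verts G' := by
        rcases Finset.mem_union.1 hv with h | h
        · exact Finset.mem_union_left _ h
        · exact Finset.mem_union_right _ (hvsub₀ h)
      rw [hnet₀ v]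
      exact hFE v hv'
    exact reduce G J (verts G₀ \ sources G).card G₀ J₀ le_rfl hF₀ hCB₀ hFE₀ hNL₀
  · rintro ⟨G', J', hF, hCB, hFE, _⟩
    exact ⟨G', J', hF, hCB, hFE⟩
end
end
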